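/- For 0 < σ < 1 and c > 0, with φ_c the endpoint solitary wave profile, one has P(φ_c) + (c/2) M(φ_c) = (1/(2σ+2)) ∫_ℝ Φ_c^{2σ+2} dx > 0, where P(u) = Im ∫_ℝ u · conj(∂_x u) dx and M(u) = ∫ |u|² dx. -/

import Mathlib

open Real MeasureTheory

noncomputable def Phi (σ c : ℝ) (x : ℝ) : ℝ :=
  (2 * (σ + 1) * c / (σ ^ 2 * (c * x) ^ 2 + 1)) ^ (1 / (2 * σ))

noncomputable def soliton (σ c : ℝ) (x : ℝ) : ℂ :=
  (Phi σ c x : ℂ) *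
    Complex.exp (Complex.I *
      (((c / 2) * x - (1 / (2 * σ + 2)) * ∫ y in (0:ℝ)..x, (Phi σ c y) ^ (2 * σ) : ℝ) : ℂ))

/-- momentum `P(u) = Im ∫ u ⬝ conj (∂ₓ u)` -/
noncomputable def momentum (u : ℝ → ℂ) : ℝ :=
  ∫ x : ℝ, (u x * (starRingEnd ℂ) (deriv u x)).im

/-- mass `M(u) = ∫ |u|²` -/
noncomputable def mass (u : ℝ → ℂ) : ℝ :=
  ∫ x : ℝ, ‖u x‖ ^ 2

lemma base_pos {σ c : ℝ} (hσ : 0 < σ) (hc : 0 < c) (x : ℝ) :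
    0 < 2 * (σ + 1) * c / (σ ^ 2 * (c * x) ^ 2 + 1) :=
  div_pos (by nlinarith) (by positivity)

lemma Phi_pos {σ c : ℝ} (hσ : 0 < σ) (hc : 0 < c) (x : ℝ) : 0 < Phi σ c x :=
  Real.rpow_pos_of_pos (base_pos hσ hc x) _

lemma Phi_pow_two_sigma {σ c : ℝ} (hσ : 0 < σ) (hc : 0 < c) (x : ℝ) :
    Phi σ c x ^ (2 * σ) = 2 * (σ + 1) * c / (σ ^ 2 * (c * x) ^ 2 + 1) := by
  rw [Phi, ← Real.rpow_mul (base_pos hσ hc x).le, one_div,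
    inv_mul_cancel₀ (by positivity), Real.rpow_one]

lemma base_continuous (σ c : ℝ) :
    Continuous fun x : ℝ => 2 * (σ + 1) * c / (σ ^ 2 * (c * x) ^ 2 + 1) := by
  apply Continuous.div continuous_const (by continuity)
  intro x; positivity

lemma Phi_continuous {σ c : ℝ} (hσ : 0 < σ) (hc : 0 < c) : Continuous (Phi σ c) := by
  apply Continuous.rpow_const (base_continuous σ c)
  intro x; exact Or.inl (base_pos hσ hc x).ne'

lemma Phi_diff {σ c : ℝ} (hσ : 0 < σ) (hc : 0 < c) (x : ℝ) :
    DifferentiableAt ℝ (Phi σ c) x := by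
  apply DifferentiableAt.rpow_const
  · exact DifferentiableAt.div (differentiableAt_const _) (by fun_prop)
      (by positivity)
  · exact Or.inl (base_pos hσ hc x).ne'

noncomputable def theta (σ c : ℝ) (x : ℝ) : ℝ :=
  (c / 2) * x - (1 / (2 * σ + 2)) * ∫ y in (0:ℝ)..x, (Phi σ c y) ^ (2 * σ)


lemma soliton_eq (σ c : ℝ) (x : ℝ) :
    soliton σ c x = (Phi σ c x : ℂ) * Complex.exp (Complex.I * (theta σ c x : ℝ)) := rfl

lemma theta_hasDeriv {σ c : ℝ} (hσ : 0 < σ) (hc : 0 < c) (x : ℝ) :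
    HasDerivAt (theta σ c)
      (c / 2 - (1 / (2 * σ + 2)) * Phi σ c x ^ (2 * σ)) x := by
  have hcont : Continuous fun y => Phi σ c y ^ (2 * σ) := by
    simp only [fun y => Phi_pow_two_sigma hσ hc y]
    exact base_continuous σ c
  have h1 : HasDerivAt (fun u => ∫ y in (0:ℝ)..u, (Phi σ c y) ^ (2 * σ))
      (Phi σ c x ^ (2 * σ)) x :=
    intervalIntegral.integral_hasDerivAt_right (hcont.intervalIntegrable _ _)
      (hcont.stronglyMeasurableAtFilter _ _) hcont.continuousAt
  unfold theta
  exact (((hasDerivAt_id x).const_mul (c/2)).sub (h1.const_mul (1 / (2 * σ + 2)))).congr_deriv (by ring)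

lemma soliton_hasDeriv {σ c : ℝ} (hσ : 0 < σ) (hc : 0 < c) (x : ℝ) :
    HasDerivAt (soliton σ c)
      ((((deriv (Phi σ c) x : ℝ) : ℂ) +
        Complex.I * ((c / 2 - (1 / (2 * σ + 2)) * Phi σ c x ^ (2 * σ) : ℝ) : ℂ) * (Phi σ c x : ℂ)) *
        Complex.exp (Complex.I * (theta σ c x : ℝ))) x := by
  have hΦ : HasDerivAt (fun y => ((Phi σ c y : ℝ) : ℂ)) (((deriv (Phi σ c) x : ℝ) : ℂ)) x :=
    ((Phi_diff hσ hc x).hasDerivAt).ofReal_comp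
  have hθ : HasDerivAt (fun y => (Complex.I * ((theta σ c y : ℝ) : ℂ)))
      (Complex.I * ((c / 2 - (1 / (2 * σ + 2)) * Phi σ c x ^ (2 * σ) : ℝ) : ℂ)) x := by
    simpa [mul_comm] using ((theta_hasDeriv hσ hc x).ofReal_comp).const_mul Complex.I
  have he := hθ.cexp
  have h := hΦ.mul he
  have hs : soliton σ c = fun y => ((Phi σ c y : ℝ) : ℂ) * Complex.exp (Complex.I * ((theta σ c y : ℝ) : ℂ)) := by
    funext y; rfl
  rw [hs]
  exact h.congr_deriv (by ring)

lemma soliton_im_eq {σ c : ℝ} (hσ : 0 < σ) (hc : 0 < c) (x : ℝ) :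
    (soliton σ c x * (starRingEnd ℂ) (deriv (soliton σ c) x)).im
      = -(c / 2 - (1 / (2 * σ + 2)) * Phi σ c x ^ (2 * σ)) * Phi σ c x ^ 2 := by
  rw [(soliton_hasDeriv hσ hc x).deriv, soliton_eq]
  set E := Complex.exp (Complex.I * (theta σ c x : ℝ)) with hE
  have hEc : (starRingEnd ℂ) E * E = 1 := by
    rw [hE, ← Complex.exp_conj, ← Complex.exp_add]
    simp [← Complex.ofReal_neg, Complex.exp_zero]
  simp only [map_mul, map_add, Complex.conj_I, Complex.conj_ofReal]
  have hkey : (Phi σ c x : ℂ) * E *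
      (((deriv (Phi σ c) x : ℝ) : ℂ) +
        -Complex.I * ((c / 2 - 1 / (2 * σ + 2) * Phi σ c x ^ (2 * σ) : ℝ) : ℂ) * (Phi σ c x : ℂ)) *
      (starRingEnd ℂ) E
      = ((starRingEnd ℂ) E * E) * ((Phi σ c x : ℂ) *
        (((deriv (Phi σ c) x : ℝ) : ℂ) -
          Complex.I * ((c / 2 - 1 / (2 * σ + 2) * Phi σ c x ^ (2 * σ) : ℝ) : ℂ) * (Phi σ c x : ℂ))) := by
    ring
  rw [show (Phi σ c x : ℂ) * E *
      ((((deriv (Phi σ c) x : ℝ) : ℂ) +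
        -Complex.I * ((c / 2 - 1 / (2 * σ + 2) * Phi σ c x ^ (2 * σ) : ℝ) : ℂ) * (Phi σ c x : ℂ)) *
      (starRingEnd ℂ) E) = (Phi σ c x : ℂ) * E *
      (((deriv (Phi σ c) x : ℝ) : ℂ) +
        -Complex.I * ((c / 2 - 1 / (2 * σ + 2) * Phi σ c x ^ (2 * σ) : ℝ) : ℂ) * (Phi σ c x : ℂ)) *
      (starRingEnd ℂ) E from by ring, hkey, hEc, one_mul]
  have h2 : (Phi σ c x : ℂ) *
        (((deriv (Phi σ c) x : ℝ) : ℂ) -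
          Complex.I * ((c / 2 - 1 / (2 * σ + 2) * Phi σ c x ^ (2 * σ) : ℝ) : ℂ) * (Phi σ c x : ℂ))
      = ((Phi σ c x * deriv (Phi σ c) x : ℝ) : ℂ) -
        Complex.I * (((c / 2 - 1 / (2 * σ + 2) * Phi σ c x ^ (2 * σ)) * Phi σ c x ^ 2 : ℝ) : ℂ) := by
    push_cast; ring
  rw [h2]
  simp only [Complex.sub_im, Complex.mul_im, Complex.I_re, Complex.I_im, Complex.ofReal_re,
    Complex.ofReal_im]
  ring
lemma soliton_norm_sq {σ c : ℝ} (hσ : 0 < σ) (hc : 0 < c) (x : ℝ) :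
    ‖soliton σ c x‖ ^ 2 = Phi σ c x ^ 2 := by
  rw [soliton_eq, norm_mul]
  simp [Complex.norm_exp, Complex.norm_real, Complex.mul_re,
    abs_of_pos (Phi_pos hσ hc x)]

lemma Phi_sq_bound {σ c : ℝ} (hσ : 0 < σ) (hσ1 : σ < 1) (hc : 0 < c) (x : ℝ) :
    Phi σ c x ^ 2 ≤ ((2 * (σ + 1) * c) ^ (1/σ) * (min (σ^2 * c^2) 1)⁻¹) * (1 + x^2)⁻¹ := by
  have hA : (0:ℝ) < 2 * (σ + 1) * c := by nlinarith
  have hq : (0:ℝ) < σ ^ 2 * (c * x) ^ 2 + 1 := by positivity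
  have h1 : Phi σ c x ^ 2 = (2 * (σ + 1) * c) ^ (1/σ) * (σ ^ 2 * (c * x) ^ 2 + 1) ^ (-(1/σ)) := by
    have he : 1 / (2 * σ) * ((2:ℕ):ℝ) = 1/σ := by push_cast; field_simp
    rw [Phi, ← Real.rpow_natCast _ 2, ← Real.rpow_mul (base_pos hσ hc x).le, he,
      Real.div_rpow hA.le hq.le, Real.rpow_neg hq.le, div_eq_mul_inv]
  rw [h1]
  have h2 : (σ ^ 2 * (c * x) ^ 2 + 1) ^ (-(1/σ)) ≤ (σ ^ 2 * (c * x) ^ 2 + 1) ^ (-1 : ℝ) := by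
    apply Real.rpow_le_rpow_of_exponent_le (by nlinarith)
    have : (1:ℝ) ≤ 1/σ := by rw [le_div_iff₀ hσ]; linarith
    linarith
  have h3 : (σ ^ 2 * (c * x) ^ 2 + 1) ^ (-1 : ℝ) ≤ (min (σ^2 * c^2) 1)⁻¹ * (1 + x^2)⁻¹ := by
    rw [Real.rpow_neg_one, ← mul_inv]
    apply inv_anti₀
    · have hm : (0:ℝ) < min (σ^2*c^2) 1 := lt_min (by positivity) one_pos
      positivity
    · have h4 : min (σ^2*c^2) 1 ≤ 1 := min_le_right _ _
      have h5 : min (σ^2*c^2) 1 ≤ σ^2*c^2 := min_le_left _ _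
      have hx2 : (0:ℝ) ≤ x^2 := sq_nonneg x
      nlinarith
  calc (2 * (σ + 1) * c) ^ (1/σ) * (σ ^ 2 * (c * x) ^ 2 + 1) ^ (-(1/σ))
      ≤ (2 * (σ + 1) * c) ^ (1/σ) * ((min (σ^2 * c^2) 1)⁻¹ * (1 + x^2)⁻¹) := by
        apply mul_le_mul_of_nonneg_left (h2.trans h3) (Real.rpow_nonneg hA.le _)
    _ = _ := by ring

lemma integrable_Phi_sq {σ c : ℝ} (hσ : 0 < σ) (hσ1 : σ < 1) (hc : 0 < c) :
    Integrable (fun x : ℝ => Phi σ c x ^ 2) := by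
  set C := (2 * (σ + 1) * c) ^ (1/σ) * (min (σ^2 * c^2) 1)⁻¹ with hC
  have hC0 : 0 ≤ C := by
    apply mul_nonneg (Real.rpow_nonneg (by nlinarith) _)
    have hm : (0:ℝ) < min (σ^2*c^2) 1 := lt_min (by positivity) one_pos
    positivity
  apply Integrable.mono (integrable_inv_one_add_sq.const_mul C)
  · exact (((Phi_continuous hσ hc).pow 2).aestronglyMeasurable)
  · filter_upwards with x
    rw [Real.norm_eq_abs, Real.norm_eq_abs, abs_of_nonneg (by positivity),
      abs_of_nonneg (by positivity)]
    exact Phi_sq_bound hσ hσ1 hc x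

lemma integrable_Phi_rpow {σ c : ℝ} (hσ : 0 < σ) (hσ1 : σ < 1) (hc : 0 < c) :
    Integrable (fun x : ℝ => Phi σ c x ^ (2 * σ + 2)) := by
  have hA : (0:ℝ) < 2 * (σ + 1) * c := by nlinarith
  have key : ∀ x : ℝ, Phi σ c x ^ (2 * σ + 2) = Phi σ c x ^ (2*σ) * Phi σ c x ^ 2 := by
    intro x
    rw [Real.rpow_add (Phi_pos hσ hc x), ← Real.rpow_natCast (Phi σ c x) 2]
    norm_num
  apply Integrable.mono ((integrable_Phi_sq hσ hσ1 hc).const_mul (2 * (σ + 1) * c))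
  · apply Continuous.aestronglyMeasurable
    apply Continuous.rpow_const (Phi_continuous hσ hc)
    intro x; exact Or.inl (Phi_pos hσ hc x).ne'
  · filter_upwards with x
    rw [key x, Real.norm_eq_abs, Real.norm_eq_abs,
      abs_of_nonneg (mul_nonneg (Real.rpow_nonneg (Phi_pos hσ hc x).le _) (sq_nonneg _)),
      abs_of_nonneg (mul_nonneg hA.le (sq_nonneg _))]
    apply mul_le_mul_of_nonneg_right _ (by positivity)
    rw [Phi_pow_two_sigma hσ hc x]
    apply div_le_self hA.le (by nlinarith)

theorem momentum_mass_pos (σ c : ℝ) (hσ : 0 < σ) (hσ1 : σ < 1) (hc : 0 < c) :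
    momentum (soliton σ c) + (c / 2) * mass (soliton σ c)
        = (1 / (2 * σ + 2)) * ∫ x : ℝ, (Phi σ c x) ^ (2 * σ + 2) ∧
    0 < momentum (soliton σ c) + (c / 2) * mass (soliton σ c) := by
  have hI2 := integrable_Phi_sq hσ hσ1 hc
  have hI22 := integrable_Phi_rpow hσ hσ1 hc
  have key : ∀ x : ℝ, Phi σ c x ^ (2 * σ + 2) = Phi σ c x ^ (2*σ) * Phi σ c x ^ 2 := by
    intro x
    rw [Real.rpow_add (Phi_pos hσ hc x), ← Real.rpow_natCast (Phi σ c x) 2]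
    norm_num
  have hmom : momentum (soliton σ c)
      = (1 / (2 * σ + 2)) * (∫ x : ℝ, Phi σ c x ^ (2 * σ + 2))
        - (c / 2) * (∫ x : ℝ, Phi σ c x ^ 2) := by
    rw [momentum]
    have h1 : (fun x : ℝ => (soliton σ c x * (starRingEnd ℂ) (deriv (soliton σ c) x)).im)
        = fun x : ℝ => (1 / (2 * σ + 2)) * Phi σ c x ^ (2 * σ + 2) - (c / 2) * Phi σ c x ^ 2 := by
      funext x
      rw [soliton_im_eq hσ hc x, key x]
      ring
    rw [h1, integral_sub (hI22.const_mul _) (hI2.const_mul _),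
      MeasureTheory.integral_const_mul, MeasureTheory.integral_const_mul]
  have hmass : mass (soliton σ c) = ∫ x : ℝ, Phi σ c x ^ 2 := by
    rw [mass]
    congr 1
    funext x
    exact soliton_norm_sq hσ hc x
  have heq : momentum (soliton σ c) + (c / 2) * mass (soliton σ c)
      = (1 / (2 * σ + 2)) * ∫ x : ℝ, (Phi σ c x) ^ (2 * σ + 2) := by
    rw [hmom, hmass]; ring
  refine ⟨heq, ?_⟩
  rw [heq]
  apply mul_pos (by positivity)
  rw [MeasureTheory.integral_pos_iff_support_of_nonneg
    (fun x => (Real.rpow_pos_of_pos (Phi_pos hσ hc x) _).le) hI22]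
  have hs : Function.support (fun x : ℝ => Phi σ c x ^ (2 * σ + 2)) = Set.univ := by
    ext x
    simp [Function.mem_support, (Real.rpow_pos_of_pos (Phi_pos hσ hc x) (2*σ+2)).ne']
  rw [hs]
  simp
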